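/- For reals a, b, c, x, y, define C₂ = t³ + (k + ε(aj - bk + 2xi + 2yj))t² + (1 + ε(ai + ck + 2yi - 2xj + b))t + k - cε and Q'₄ = t - k - xεi - yεj. Then C₂·(Q'₄)² = C·(t² + 1), where C = t³ - (k - ε(aj - bk))t² + (1 - ε(b + ai - ck))t - k + cε. -/

import Mathlib

open Polynomial DualNumber TrivSqZeroExt

noncomputable section
set_option maxHeartbeats 1000000
set_option synthInstance.maxHeartbeats 400000

/-- Dual quaternions: dual numbers over the real quaternions. -/
abbrev DQ : Type := DualNumber (Quaternion ℝ)

/-- The quaternion unit i inside the dual quaternions. -/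
def Di : DQ := inl ⟨0,1,0,0⟩
/-- The quaternion unit j inside the dual quaternions. -/
def Dj : DQ := inl ⟨0,0,1,0⟩
/-- The quaternion unit k inside the dual quaternions. -/
def Dk : DQ := inl ⟨0,0,0,1⟩
/-- Embedding of real scalars into the dual quaternions. -/
def rr (x : ℝ) : DQ := algebraMap ℝ DQ x
/-- Dual quaternion conjugation: quaternion conjugation on primal and dual parts. -/
def qconj (h : DQ) : DQ := inl (star (fst h)) + inr (star (snd h))
/-- The Darboux motion polynomial
C = t³ - (k - ε(aj - bk))t² + (1 - ε(b + ai - ck))t - k + cε. -/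
def darboux (a b c : ℝ) : Polynomial DQ :=
  X ^ 3 - Polynomial.C (Dk - eps * (rr a * Dj - rr b * Dk)) * X ^ 2
    + Polynomial.C (1 - eps * (rr b + rr a * Di - rr c * Dk)) * X
    - Polynomial.C Dk + Polynomial.C (rr c * eps)
/-- The cubic motion polynomial C₂ of the factorization FIII. -/
def C2 (a b c x y : ℝ) : Polynomial DQ :=
  X ^ 3 + Polynomial.C (Dk + eps * (rr a * Dj - rr b * Dk + rr (2*x) * Di + rr (2*y) * Dj)) * X ^ 2
    + Polynomial.C (1 + eps * (rr a * Di + rr c * Dk + rr (2*y) * Di - rr (2*x) * Dj + rr b)) * X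
    + Polynomial.C (Dk - rr c * eps)

section Aux

variable {A : Type*} [Ring A]

lemma aux_Xp_C (n : ℕ) (a : A) (p : A[X]) : X^n * (Polynomial.C a * p) = Polynomial.C a * (X^n * p) := by
  rw [← mul_assoc, X_pow_mul_C, mul_assoc]

lemma aux_X_C (a : A) (p : A[X]) : X * (Polynomial.C a * p) = Polynomial.C a * (X * p) := by
  rw [← mul_assoc, X_mul_C, mul_assoc]

lemma aux_expandL (p2 p1 p0 s2 s0 : A) :
  (X^3 + Polynomial.C p2*X^2 + Polynomial.C p1*X + Polynomial.C p0) *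
      (X^2 - Polynomial.C s2*X + Polynomial.C s0)
  = X^5 + Polynomial.C (p2 - s2)*X^4 + Polynomial.C (p1 - p2*s2 + s0)*X^3
    + Polynomial.C (p0 - p1*s2 + p2*s0)*X^2
    + Polynomial.C (-(p0*s2) + p1*s0)*X + Polynomial.C (p0*s0) := by
  simp only [map_add, map_sub, map_mul, map_neg, mul_add, add_mul, mul_sub, sub_mul, mul_assoc,
    aux_Xp_C, aux_X_C, X_pow_mul_C, X_mul_C, neg_mul, mul_neg]
  simp only [← map_mul, ← sq, ← pow_succ, ← pow_succ', ← pow_add, ← pow_mul]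
  norm_num
  abel

lemma aux_sqL (s : A) :
    (X - Polynomial.C s)^2 = X^2 - Polynomial.C (s + s) * X + Polynomial.C (s*s) := by
  simp only [sq, mul_sub, sub_mul, X_mul_C, map_add, map_mul, add_mul]
  abel

lemma aux_quintic_congr {e4 e3 e2 e1 e0 f4 f3 f2 f1 f0 : A}
    (h4 : e4 = f4) (h3 : e3 = f3) (h2 : e2 = f2) (h1 : e1 = f1) (h0 : e0 = f0) :
    X^5 + Polynomial.C e4*X^4 + Polynomial.C e3*X^3 + Polynomial.C e2*X^2
      + Polynomial.C e1*X + Polynomial.C e0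
    = X^5 + Polynomial.C f4*X^4 + Polynomial.C f3*X^3 + Polynomial.C f2*X^2
      + Polynomial.C f1*X + Polynomial.C f0 := by
  rw [h4, h3, h2, h1, h0]

end Aux

lemma darboux_shape (a b c : ℝ) : darboux a b c =
    X ^ 3 + Polynomial.C (-(Dk - eps * (rr a * Dj - rr b * Dk))) * X ^ 2
      + Polynomial.C (1 - eps * (rr b + rr a * Di - rr c * Dk)) * X
      + Polynomial.C (-Dk + rr c * eps) := by
  rw [darboux]
  simp only [Polynomial.C_neg, Polynomial.C_add, Polynomial.C_sub, add_mul, sub_mul, neg_mul,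
    neg_sub]
  abel

lemma sq1_shape : (X^2 + 1 : Polynomial DQ) =
    X^2 - Polynomial.C (0:DQ) * X + Polynomial.C (1:DQ) := by
  simp

lemma inl_fst_re (a b c d : ℝ) : (inl ⟨a,b,c,d⟩ : DQ).fst.re = a := rfl
lemma inl_fst_imI (a b c d : ℝ) : (inl ⟨a,b,c,d⟩ : DQ).fst.imI = b := rfl
lemma inl_fst_imJ (a b c d : ℝ) : (inl ⟨a,b,c,d⟩ : DQ).fst.imJ = c := rfl
lemma inl_fst_imK (a b c d : ℝ) : (inl ⟨a,b,c,d⟩ : DQ).fst.imK = d := rfl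
lemma inl_snd_re (a b c d : ℝ) : (inl ⟨a,b,c,d⟩ : DQ).snd.re = 0 := rfl
lemma inl_snd_imI (a b c d : ℝ) : (inl ⟨a,b,c,d⟩ : DQ).snd.imI = 0 := rfl
lemma inl_snd_imJ (a b c d : ℝ) : (inl ⟨a,b,c,d⟩ : DQ).snd.imJ = 0 := rfl
lemma inl_snd_imK (a b c d : ℝ) : (inl ⟨a,b,c,d⟩ : DQ).snd.imK = 0 := rfl

set_option maxHeartbeats 1000000 in
set_option synthInstance.maxHeartbeats 200000 in
/-- C₂·(Q'₄)² = C·(t²+1) where Q'₄ = t - k - xεi - yεj. -/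
theorem stmt18 (a b c x y : ℝ) :
    C2 a b c x y * (X - Polynomial.C (Dk + rr x * eps * Di + rr y * eps * Dj)) ^ 2 =
      darboux a b c * (X ^ 2 + 1) := by
  rw [aux_sqL, C2, darboux_shape, sq1_shape, aux_expandL, aux_expandL]
  refine aux_quintic_congr ?_ ?_ ?_ ?_ ?_ <;>
  · ext <;>
      simp only [Di, Dj, Dk, rr, algebraMap_eq_inl', TrivSqZeroExt.fst_mul, DualNumber.snd_mul,
        fst_add, snd_add, fst_inl, snd_inl, fst_eps, snd_eps, fst_neg, snd_neg, fst_one, snd_one,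
        fst_sub, snd_sub, fst_zero, snd_zero] <;>
      open Quaternion in simp [Quaternion.ext_iff, inl_fst_re, inl_fst_imI, inl_fst_imJ, inl_fst_imK,
        inl_snd_re, inl_snd_imI, inl_snd_imJ, inl_snd_imK] <;>
      ring
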